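/- Let m ≥ 1 be an integer, let ξ₁, ..., ξ_m be complex numbers, and let β, σ₁, ..., σ_m, τ, ν be positive reals with σ₁ + ⋯ + σ_m + τ < 1 and 1 < ν < 1 + β − σ₁ − ⋯ − σ_m − τ. Then for each sufficiently large integer n ≥ 1, there exists a nonzero polynomial P_n ∈ ℤ[T] of degree at most n and height at most exp(n^β) such that |P_n^{[j]}(i₁ξ₁ + ⋯ + i_m ξ_m)| ≤ exp(−n^ν) for all integers i₁, ..., i_m, j with 0 ≤ i_k ≤ n^{σ_k} for each k and 0 ≤ j ≤ n^τ. -/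

import Mathlib

open Finset Filter Polynomial

lemma abs_sub_le_of_floor_div_eq {x y δ : ℝ} (hδ : 0 < δ) (h : ⌊x / δ⌋ = ⌊y / δ⌋) :
    |x - y| ≤ δ := by
  have h1 : x / δ - y / δ < 1 := by
    have h2 := Int.lt_floor_add_one (x / δ)
    have h3 := Int.floor_le (y / δ)
    rw [h] at h2; linarith
  have h1' : y / δ - x / δ < 1 := by
    have h2 := Int.lt_floor_add_one (y / δ)
    have h3 := Int.floor_le (x / δ)
    rw [h] at h3; linarith
  rw [abs_sub_le_iff]
  constructor
  · have : (x - y) / δ < 1 := by rw [sub_div]; exact h1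
    nlinarith [(div_lt_one hδ).1 this]
  · have : (y - x) / δ < 1 := by rw [sub_div]; exact h1'
    nlinarith [(div_lt_one hδ).1 this]

lemma dirichlet_box {α : Type*} [Fintype α] (K H : ℕ) (c : α → Fin K → ℂ) (δ B : ℝ)
    (hδ : 0 < δ)
    (hB : ∀ a, ∀ p : Fin K → ℕ, (∀ i, p i ≤ H) →
      ‖∑ i, (p i : ℂ) * c a i‖ ≤ B)
    (hcard : ((2 * ⌈B / δ⌉₊ + 1) ^ 2) ^ (Fintype.card α) < (H + 1) ^ K) :
    ∃ q : Fin K → ℤ, q ≠ 0 ∧ (∀ i, |q i| ≤ (H : ℤ)) ∧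
      ∀ a, ‖∑ i, (q i : ℂ) * c a i‖ ≤ 2 * δ := by
  classical
  set R : ℤ := (⌈B / δ⌉₊ : ℤ) with hR
  set L : (Fin K → Fin (H + 1)) → α → ℂ := fun p a => ∑ i, ((p i : ℕ) : ℂ) * c a i with hL
  set f : (Fin K → Fin (H + 1)) → (α → ℤ × ℤ) :=
    fun p a => (⌊(L p a).re / δ⌋, ⌊(L p a).im / δ⌋) with hf
  set t : Finset (α → ℤ × ℤ) :=
    Fintype.piFinset fun _ => Finset.Icc (-R) R ×ˢ Finset.Icc (-R) R with ht
  have hBL : ∀ p : Fin K → Fin (H + 1), ∀ a, ‖L p a‖ ≤ B := by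
    intro p a
    exact hB a (fun i => (p i : ℕ)) (fun i => Nat.lt_succ_iff.mp (p i).2)
  have hfloor : ∀ x : ℝ, |x| ≤ B → ⌊x / δ⌋ ∈ Finset.Icc (-R) R := by
    intro x hx
    rw [Finset.mem_Icc]
    have hxB : x ≤ B := le_of_abs_le hx
    have hxB' : -B ≤ x := neg_le_of_abs_le hx
    have hBδ : B / δ ≤ (R : ℝ) := by
      rw [hR]; push_cast; exact Nat.le_ceil _
    constructor
    · rw [Int.le_floor]
      have h1 : -B / δ ≤ x / δ := (div_le_div_iff_of_pos_right hδ).mpr hxB'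
      rw [neg_div] at h1
      push_cast
      linarith
    · have : ⌊x / δ⌋ ≤ ⌊(R : ℝ)⌋ := Int.floor_mono (by
        calc x / δ ≤ B / δ := (div_le_div_iff_of_pos_right hδ).mpr hxB
          _ ≤ (R : ℝ) := hBδ)
      simpa using this
  have hmaps : ∀ p ∈ (univ : Finset (Fin K → Fin (H + 1))), f p ∈ t := by
    intro p _
    rw [ht, Fintype.mem_piFinset]
    intro a
    rw [Finset.mem_product]
    have h1 := hBL p a
    constructor
    · exact hfloor _ ((Complex.abs_re_le_norm _).trans h1)
    · exact hfloor _ ((Complex.abs_im_le_norm _).trans h1)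
  have hcardt : t.card < (univ : Finset (Fin K → Fin (H + 1))).card := by
    rw [ht]
    rw [Finset.card_univ, Fintype.card_pi]
    simp only [Fintype.card_fin, Finset.prod_const, Finset.card_univ]
    rw [Fintype.card_piFinset]
    have hIcc : (Finset.Icc (-R) R ×ˢ Finset.Icc (-R) R).card = (2 * ⌈B / δ⌉₊ + 1) ^ 2 := by
      rw [Finset.card_product, Int.card_Icc]
      have : (R + 1 - -R).toNat = 2 * ⌈B / δ⌉₊ + 1 := by rw [hR]; omega
      rw [this]; ring
    simp only [hIcc, Finset.prod_const, Finset.card_univ]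
    exact hcard
  obtain ⟨p, _, p', _, hne, hfe⟩ := Finset.exists_ne_map_eq_of_card_lt_of_maps_to hcardt hmaps
  refine ⟨fun i => ((p i : ℕ) : ℤ) - ((p' i : ℕ) : ℤ), ?_, ?_, ?_⟩
  · intro h0
    apply hne
    funext i
    have := congrFun h0 i
    simp only [Pi.zero_apply, sub_eq_zero] at this
    exact Fin.ext (by exact_mod_cast this)
  · intro i
    have h1 : (p i : ℕ) ≤ H := Nat.lt_succ_iff.mp (p i).2
    have h2 : (p' i : ℕ) ≤ H := Nat.lt_succ_iff.mp (p' i).2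
    rw [abs_sub_le_iff]; omega
  · intro a
    have hsum : ∑ i, ((((p i : ℕ) : ℤ) - ((p' i : ℕ) : ℤ) : ℤ) : ℂ) * c a i
        = L p a - L p' a := by
      rw [hL, ← Finset.sum_sub_distrib]
      congr 1; funext i; push_cast; ring
    rw [hsum]
    have hfa : f p a = f p' a := congrFun hfe a
    rw [hf] at hfa
    have hre : ⌊(L p a).re / δ⌋ = ⌊(L p' a).re / δ⌋ := (Prod.ext_iff.mp hfa).1
    have him : ⌊(L p a).im / δ⌋ = ⌊(L p' a).im / δ⌋ := (Prod.ext_iff.mp hfa).2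
    calc ‖L p a - L p' a‖
        ≤ |(L p a - L p' a).re| + |(L p a - L p' a).im| :=
          Complex.norm_le_abs_re_add_abs_im _
      _ ≤ δ + δ := by
          gcongr
          · exact abs_sub_le_of_floor_div_eq hδ hre
          · exact abs_sub_le_of_floor_div_eq hδ him
      _ = 2 * δ := by ring

lemma aux_ev (C : ℝ) {a b : ℝ} (hab : a < b) :
    ∀ᶠ n : ℕ in atTop, C * (n : ℝ) ^ a ≤ (n : ℝ) ^ b := by
  have h := (tendsto_rpow_atTop (sub_pos.2 hab)).comp
    (tendsto_natCast_atTop_atTop (R := ℝ))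
  filter_upwards [h.eventually_ge_atTop C, eventually_ge_atTop 1] with n h1 h2
  have hx : (0 : ℝ) < (n : ℝ) := by
    have : (1 : ℝ) ≤ (n : ℝ) := by exact_mod_cast h2
    linarith
  have h1' : C ≤ (n : ℝ) ^ (b - a) := h1
  calc C * (n : ℝ) ^ a ≤ (n : ℝ) ^ (b - a) * (n : ℝ) ^ a := by
        apply mul_le_mul_of_nonneg_right h1' (Real.rpow_nonneg hx.le a)
    _ = (n : ℝ) ^ b := by rw [← Real.rpow_add hx]; ring_nf

lemma choose_le_two_pow' (d j : ℕ) : d.choose j ≤ 2 ^ d := by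
  by_cases h : j ≤ d
  · calc d.choose j ≤ ∑ r ∈ Finset.range (d + 1), d.choose r :=
        Finset.single_le_sum (fun r _ => Nat.zero_le _) (Finset.mem_range.mpr (Nat.lt_succ_of_le h))
      _ = 2 ^ d := Nat.sum_range_choose d
  · rw [Nat.choose_eq_zero_of_lt (not_le.mp h)]; exact Nat.zero_le _


lemma build_poly (n m : ℕ) (ξ : Fin m → ℂ) (A : Fin m → ℕ) (J Hn : ℕ) (δ cb Bd : ℝ)
    (hδ0 : 0 < δ) (hcb0 : 0 ≤ cb)
    (hchoose : ∀ (j d : ℕ), j ≤ J → d ≤ n → ∀ i : Fin m → ℕ, (∀ k, i k ≤ A k) →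
      ((d.choose j : ℕ) : ℝ) * ‖∑ k, (i k : ℂ) * ξ k‖ ^ (d - j) ≤ cb)
    (hBd : Bd = (n + 1) * Hn * cb)
    (hcard : ((2 * ⌈Bd / δ⌉₊ + 1) ^ 2) ^ ((∏ k, (A k + 1)) * (J + 1)) < (Hn + 1) ^ (n + 1)) :
    ∃ P : Polynomial ℤ, P ≠ 0 ∧ P.natDegree ≤ n ∧ (∀ i, |P.coeff i| ≤ (Hn : ℤ)) ∧
      ∀ (i : Fin m → ℕ) (j : ℕ), (∀ k, i k ≤ A k) → j ≤ J →
        ‖(Polynomial.hasseDeriv j (P.map (Int.castRingHom ℂ))).eval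
          (∑ k, (i k : ℂ) * ξ k)‖ ≤ 2 * δ := by
  classical
  set z : ((k : Fin m) → Fin (A k + 1)) → ℂ := fun i => ∑ k, ((i k : ℕ) : ℂ) * ξ k with hzdef
  set c : (((k : Fin m) → Fin (A k + 1)) × Fin (J + 1)) → Fin (n + 1) → ℂ :=
    fun a d => (((d : ℕ).choose (a.2 : ℕ) : ℕ) : ℂ) * (z a.1) ^ ((d : ℕ) - (a.2 : ℕ)) with hcdef
  have hcb : ∀ (a : ((k : Fin m) → Fin (A k + 1)) × Fin (J + 1)) (d : Fin (n + 1)),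
      ‖c a d‖ ≤ cb := by
    intro a d
    rw [hcdef]
    rw [norm_mul, Complex.norm_natCast, norm_pow]
    exact hchoose (a.2 : ℕ) (d : ℕ) (Nat.lt_succ_iff.mp a.2.2) (Nat.lt_succ_iff.mp d.2)
      (fun k => (a.1 k : ℕ)) (fun k => Nat.lt_succ_iff.mp (a.1 k).2)
  have hBcond : ∀ (a : ((k : Fin m) → Fin (A k + 1)) × Fin (J + 1)) (p : Fin (n + 1) → ℕ),
      (∀ i, p i ≤ Hn) → ‖∑ i, (p i : ℂ) * c a i‖ ≤ Bd := by
    intro a p hp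
    calc ‖∑ i, (p i : ℂ) * c a i‖
        ≤ ∑ i, ‖(p i : ℂ) * c a i‖ := norm_sum_le _ _
      _ ≤ ∑ _i : Fin (n + 1), (Hn : ℝ) * cb := by
          apply Finset.sum_le_sum
          intro i _
          rw [norm_mul, Complex.norm_natCast]
          apply mul_le_mul _ (hcb a i) (norm_nonneg _) (Nat.cast_nonneg _)
          exact_mod_cast hp i
      _ = Bd := by
          rw [Finset.sum_const, Finset.card_univ, Fintype.card_fin, hBd]
          push_cast
          ring
  have hcard' : ((2 * ⌈Bd / δ⌉₊ + 1) ^ 2) ^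
      (Fintype.card (((k : Fin m) → Fin (A k + 1)) × Fin (J + 1))) < (Hn + 1) ^ (n + 1) := by
    have : Fintype.card (((k : Fin m) → Fin (A k + 1)) × Fin (J + 1))
        = (∏ k, (A k + 1)) * (J + 1) := by
      rw [Fintype.card_prod, Fintype.card_pi]
      simp [Fintype.card_fin]
    rw [this]
    exact hcard
  obtain ⟨q, hq0, hq1, hq2⟩ := dirichlet_box (n + 1) Hn c δ Bd hδ0 hBcond hcard'
  set P : Polynomial ℤ := ∑ d : Fin (n + 1), Polynomial.monomial (d : ℕ) (q d) with hPdef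
  have hPcoeff : ∀ r : ℕ, P.coeff r = if h : r < n + 1 then q ⟨r, h⟩ else 0 := by
    intro r
    rw [hPdef, Polynomial.finset_sum_coeff]
    simp only [Polynomial.coeff_monomial]
    by_cases h : r < n + 1
    · rw [dif_pos h]
      rw [Finset.sum_eq_single (⟨r, h⟩ : Fin (n + 1))]
      · simp
      · intro b _ hb
        rw [if_neg]
        exact fun hc => hb (Fin.ext hc)
      · intro hmem
        exact absurd (Finset.mem_univ _) hmem
    · rw [dif_neg h]
      apply Finset.sum_eq_zero
      intro d _
      rw [if_neg]
      exact fun hc => h (hc ▸ d.2)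
  have hEval : ∀ a : ((k : Fin m) → Fin (A k + 1)) × Fin (J + 1),
      (Polynomial.hasseDeriv (a.2 : ℕ) (P.map (Int.castRingHom ℂ))).eval (z a.1)
        = ∑ d, (q d : ℂ) * c a d := by
    intro a
    have h1 : P.map (Int.castRingHom ℂ)
        = ∑ d : Fin (n + 1), Polynomial.monomial (d : ℕ) ((q d : ℂ)) := by
      rw [hPdef, ← Polynomial.coe_mapRingHom, map_sum]
      apply Finset.sum_congr rfl
      intro d _
      rw [Polynomial.coe_mapRingHom, Polynomial.map_monomial]
      norm_num
    rw [h1, map_sum]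
    simp only [Polynomial.hasseDeriv_monomial]
    rw [Polynomial.eval_finset_sum]
    simp only [Polynomial.eval_monomial]
    apply Finset.sum_congr rfl
    intro d _
    rw [hcdef]
    push_cast
    ring
  refine ⟨P, ?_, ?_, ?_, ?_⟩
  · obtain ⟨d, hd⟩ := Function.ne_iff.mp hq0
    intro hP0
    apply hd
    have h1 : P.coeff (d : ℕ) = q d := by
      rw [hPcoeff, dif_pos d.2]
    rw [hP0] at h1
    simp at h1
    exact h1.symm
  · apply Polynomial.natDegree_le_iff_coeff_eq_zero.mpr
    intro N hN
    rw [hPcoeff, dif_neg (by omega)]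
  · intro r
    rw [hPcoeff]
    by_cases h : r < n + 1
    · rw [dif_pos h]
      exact hq1 _
    · rw [dif_neg h]
      simp
  · intro i j hik hj
    have hik' : ∀ k, i k < A k + 1 := fun k => Nat.lt_succ_of_le (hik k)
    have hj' : j < J + 1 := Nat.lt_succ_of_le hj
    have hgoal : (Polynomial.hasseDeriv j (P.map (Int.castRingHom ℂ))).eval
        (∑ k, (i k : ℂ) * ξ k) = ∑ d, (q d : ℂ) *
          c ((fun k => ⟨i k, hik' k⟩ : (k : Fin m) → Fin (A k + 1)),
             (⟨j, hj'⟩ : Fin (J + 1))) d :=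
      hEval ((fun k => ⟨i k, hik' k⟩), ⟨j, hj'⟩)
    rw [hgoal]
    exact hq2 _

set_option maxHeartbeats 1000000 in
theorem stmt_16 (m : ℕ) (hm : 1 ≤ m) (ξ : Fin m → ℂ) (β τ ν : ℝ) (σ : Fin m → ℝ)
    (hβ : 0 < β) (hσ : ∀ k, 0 < σ k) (hτ : 0 < τ) (hν : 0 < ν) (hν1 : 1 < ν)
    (hsum : (∑ k, σ k) + τ < 1) (hν2 : ν < 1 + β - (∑ k, σ k) - τ) :
    ∃ N : ℕ, 1 ≤ N ∧ ∀ n : ℕ, N ≤ n →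
      ∃ P : Polynomial ℤ, P ≠ 0 ∧ P.natDegree ≤ n ∧
        (∀ i, ((|P.coeff i| : ℤ) : ℝ) ≤ Real.exp ((n : ℝ) ^ β)) ∧
        ∀ (i : Fin m → ℕ) (j : ℕ),
          (∀ k, (i k : ℝ) ≤ (n : ℝ) ^ (σ k)) → ((j : ℝ) ≤ (n : ℝ) ^ τ) →
          ‖(Polynomial.hasseDeriv j (P.map (Int.castRingHom ℂ))).eval
              (∑ k, (i k : ℂ) * ξ k)‖ ≤ Real.exp (-(n : ℝ) ^ ν) := by
  classical
  set s : ℝ := ∑ k, σ k with hs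
  set W : ℝ := 1 + ∑ k, ‖ξ k‖ with hWdef
  have hW1 : 1 ≤ W := by
    rw [hWdef]
    have : (0 : ℝ) ≤ ∑ k, ‖ξ k‖ :=
      Finset.sum_nonneg fun k _ => norm_nonneg _
    linarith
  have hlogW : 0 ≤ Real.log W := Real.log_nonneg hW1
  set γ : ℝ := max β ν with hγdef
  have hγν : ν ≤ γ := le_max_right _ _
  have hγβ : β ≤ γ := le_max_left _ _
  have hγ1 : 1 < γ := lt_of_lt_of_le hν1 hγν
  have hsτ : 0 < s := by
    rw [hs]
    exact Finset.sum_pos (fun k _ => hσ k) (Finset.univ_nonempty_iff.mpr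
      (by rwa [← Fin.pos_iff_nonempty]))
  have hab : s + τ + γ < 1 + β := by
    have h1 : β < 1 + β - s - τ := by linarith
    have h2 : ν < 1 + β - s - τ := hν2
    have : γ < 1 + β - s - τ := max_lt h1 h2
    linarith
  set ε : ℝ := (γ - 1) / 2 with hεdef
  have hε : 0 < ε := by rw [hεdef]; linarith
  have hεγ : 1 + ε < γ := by rw [hεdef]; linarith
  have F2 : ∀ᶠ n : ℕ in atTop, (2 + Real.log W) * (n : ℝ) ^ (1 : ℝ) ≤ (n : ℝ) ^ γ :=
    aux_ev _ hγ1
  have F3' : ∀ᶠ n : ℕ in atTop, (1 / ε) * (n : ℝ) ^ (1 + ε) ≤ (n : ℝ) ^ γ :=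
    aux_ev _ hεγ
  have F4 : ∀ᶠ n : ℕ in atTop, (3 : ℝ) * (n : ℝ) ^ (0 : ℝ) ≤ (n : ℝ) ^ γ :=
    aux_ev _ (by linarith : (0:ℝ) < γ)
  have F5 : ∀ᶠ n : ℕ in atTop,
      ((20 * 2 ^ (m + 1) + 1) : ℝ) * (n : ℝ) ^ (s + τ + γ) ≤ (n : ℝ) ^ (1 + β) :=
    aux_ev _ hab
  rw [eventually_atTop] at F2 F3' F4 F5
  obtain ⟨N2, hN2⟩ := F2
  obtain ⟨N3, hN3⟩ := F3'
  obtain ⟨N4, hN4⟩ := F4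
  obtain ⟨N5, hN5⟩ := F5
  refine ⟨max (max (max N2 N3) (max N4 N5)) 1, le_max_right _ _, ?_⟩
  intro n hn
  set x : ℝ := (n : ℝ) with hxdef
  have hn1 : 1 ≤ n := le_trans (le_max_right _ _) hn
  have hx1 : (1 : ℝ) ≤ x := by rw [hxdef]; exact_mod_cast hn1
  have hx0 : (0 : ℝ) < x := by linarith
  have e2 : (2 + Real.log W) * x ≤ x ^ γ := by
    have := hN2 n (le_trans (le_max_left _ _ |>.trans (le_max_left _ _ |>.trans (le_max_left _ _))) hn)
    rwa [Real.rpow_one] at this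
  have e3 : x * Real.log x ≤ x ^ γ := by
    have h1 := hN3 n (le_trans ((le_max_right _ _).trans ((le_max_left _ _).trans (le_max_left _ _))) hn)
    have hlog : Real.log x ≤ x ^ ε / ε := Real.log_le_rpow_div hx0.le hε
    calc x * Real.log x ≤ x * (x ^ ε / ε) := by
          apply mul_le_mul_of_nonneg_left hlog (by linarith)
      _ = (1 / ε) * (x ^ (1:ℝ) * x ^ ε) := by rw [Real.rpow_one]; field_simp
      _ = (1 / ε) * x ^ (1 + ε) := by rw [← Real.rpow_add hx0]
      _ ≤ x ^ γ := h1
  have e4 : (3 : ℝ) ≤ x ^ γ := by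
    have := hN4 n (le_trans ((le_max_left _ _).trans ((le_max_right _ _).trans (le_max_left _ _))) hn)
    rwa [Real.rpow_zero, mul_one] at this
  have e5 : ((20 * 2 ^ (m + 1) + 1) : ℝ) * x ^ (s + τ + γ) ≤ x ^ (1 + β) := by
    exact hN5 n (le_trans ((le_max_right _ _).trans ((le_max_right _ _).trans (le_max_left _ _))) hn)
  have eν : x ^ ν ≤ x ^ γ := Real.rpow_le_rpow_of_exponent_le hx1 hγν
  have eβ : x ^ β ≤ x ^ γ := Real.rpow_le_rpow_of_exponent_le hx1 hγβ
  have hσ1 : ∀ k, σ k ≤ 1 := by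
    intro k
    have := Finset.single_le_sum (f := σ) (fun k _ => (hσ k).le) (Finset.mem_univ k)
    rw [← hs] at this
    linarith
  have hlogx : 0 ≤ Real.log x := Real.log_nonneg hx1
  -- scalar abbreviations
  set Z : ℝ := ∑ k, x ^ σ k * ‖ξ k‖ with hZdef
  have hmax1 : (1:ℝ) ≤ max 1 Z := le_max_left _ _
  have hZ1 : max 1 Z ≤ x * W := by
    have h1 : Z ≤ x * W := by
      rw [hZdef, hWdef]
      calc ∑ k, x ^ σ k * ‖ξ k‖ ≤ ∑ k, x * ‖ξ k‖ := by
            apply Finset.sum_le_sum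
            intro k _
            apply mul_le_mul_of_nonneg_right _ (norm_nonneg _)
            calc x ^ σ k ≤ x ^ (1:ℝ) :=
                  Real.rpow_le_rpow_of_exponent_le hx1 (hσ1 k)
              _ = x := Real.rpow_one x
        _ = x * ∑ k, ‖ξ k‖ := by rw [Finset.mul_sum]
        _ ≤ x * (1 + ∑ k, ‖ξ k‖) := by
            apply mul_le_mul_of_nonneg_left (by linarith) (by linarith)
    have h2 : (1:ℝ) ≤ x * W := by
      calc (1:ℝ) = 1 * 1 := by ring
        _ ≤ x * W := mul_le_mul hx1 hW1 zero_le_one (by linarith)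
    exact max_le h2 h1
  set Hn : ℕ := ⌊Real.exp (x ^ β)⌋₊ with hHdef
  have hHn1 : 1 ≤ Hn := by
    rw [hHdef]
    exact Nat.one_le_floor_iff _ |>.mpr (Real.one_le_exp (by positivity))
  have hHnle : (Hn : ℝ) ≤ Real.exp (x ^ β) := Nat.floor_le (Real.exp_nonneg _)
  set δ : ℝ := Real.exp (-x ^ ν) / 4 with hδdef
  have hδ0 : 0 < δ := by rw [hδdef]; positivity
  set cb : ℝ := 2 ^ n * (max 1 Z) ^ n with hcbdef
  have hcb0 : (0:ℝ) ≤ cb := by rw [hcbdef]; positivity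
  have hcb1 : (1:ℝ) ≤ cb := by
    rw [hcbdef]
    have h3 : (1:ℝ) ≤ (2:ℝ) ^ n := one_le_pow₀ one_le_two
    have h4 : (1:ℝ) ≤ (max 1 Z) ^ n := one_le_pow₀ hmax1
    calc (1:ℝ) = 1 * 1 := by ring
      _ ≤ (2:ℝ) ^ n * (max 1 Z) ^ n := mul_le_mul h3 h4 zero_le_one (by positivity)
  set Bd : ℝ := ((n : ℝ) + 1) * (Hn : ℝ) * cb with hBdef
  have hBd1 : 1 ≤ Bd := by
    rw [hBdef]
    have h1 : (1:ℝ) ≤ (n : ℝ) + 1 := by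
      have : (0:ℝ) ≤ (n:ℝ) := Nat.cast_nonneg n
      linarith
    have h2 : (1:ℝ) ≤ (Hn : ℝ) := by exact_mod_cast hHn1
    calc (1:ℝ) = 1 * 1 * 1 := by ring
      _ ≤ ((n : ℝ) + 1) * (Hn : ℝ) * cb :=
          mul_le_mul (mul_le_mul h1 h2 zero_le_one (by linarith)) hcb1 zero_le_one
            (by positivity)
  have hBd0 : 0 ≤ Bd := by linarith
  -- the coefficient bound hypothesis
  have hchoose : ∀ (j d : ℕ), j ≤ ⌊x ^ τ⌋₊ → d ≤ n → ∀ i : Fin m → ℕ,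
      (∀ k, i k ≤ ⌊x ^ σ k⌋₊) →
      ((d.choose j : ℕ) : ℝ) * ‖∑ k, (i k : ℂ) * ξ k‖ ^ (d - j) ≤ cb := by
    intro j d hj hd i hi
    have hz : ‖∑ k, (i k : ℂ) * ξ k‖ ≤ Z := by
      rw [hZdef]
      calc ‖∑ k, (i k : ℂ) * ξ k‖
          ≤ ∑ k, ‖(i k : ℂ) * ξ k‖ := norm_sum_le _ _
        _ ≤ ∑ k, x ^ σ k * ‖ξ k‖ := by
            apply Finset.sum_le_sum
            intro k _
            rw [norm_mul, Complex.norm_natCast]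
            apply mul_le_mul_of_nonneg_right _ (norm_nonneg _)
            calc ((i k : ℕ) : ℝ) ≤ (⌊x ^ σ k⌋₊ : ℝ) := by exact_mod_cast hi k
              _ ≤ x ^ σ k := Nat.floor_le (by positivity)
    have h1 : ((d.choose j : ℕ) : ℝ) ≤ 2 ^ n := by
      calc ((d.choose j : ℕ) : ℝ) ≤ ((2 ^ d : ℕ) : ℝ) := by
            exact_mod_cast choose_le_two_pow' d j
        _ ≤ 2 ^ n := by
            push_cast
            exact pow_le_pow_right₀ one_le_two hd
    have h2 : ‖∑ k, (i k : ℂ) * ξ k‖ ^ (d - j) ≤ (max 1 Z) ^ n := by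
      calc ‖∑ k, (i k : ℂ) * ξ k‖ ^ (d - j)
          ≤ (max 1 Z) ^ (d - j) := by
            apply pow_le_pow_left₀ (norm_nonneg _)
            exact le_max_of_le_right hz
        _ ≤ (max 1 Z) ^ n := by
            apply pow_le_pow_right₀ hmax1
            omega
    rw [hcbdef]
    exact mul_le_mul h1 h2 (by positivity) (by positivity)
  -- the counting condition
  set E : ℝ := x ^ β + 2 * n + n * (Real.log x + Real.log W) + x ^ ν + 3 with hEdef
  have hE0 : 0 ≤ E := by
    rw [hEdef]
    have h1 : (0:ℝ) ≤ x ^ β := Real.rpow_nonneg hx0.le _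
    have h2 : (0:ℝ) ≤ x ^ ν := Real.rpow_nonneg hx0.le _
    have h3 : (0:ℝ) ≤ (n:ℝ) := Nat.cast_nonneg n
    have h4 : (0:ℝ) ≤ (n:ℝ) * (Real.log x + Real.log W) :=
      mul_nonneg h3 (by linarith)
    linarith
  have hT : (((∏ k, (⌊x ^ σ k⌋₊ + 1)) * (⌊x ^ τ⌋₊ + 1) : ℕ) : ℝ)
      ≤ 2 ^ (m + 1) * x ^ (s + τ) := by
    push_cast
    have h1 : ∀ k : Fin m, ((⌊x ^ σ k⌋₊ : ℝ) + 1) ≤ 2 * x ^ σ k := by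
      intro k
      have ha : (⌊x ^ σ k⌋₊ : ℝ) ≤ x ^ σ k := Nat.floor_le (by positivity)
      have hb : (1:ℝ) ≤ x ^ σ k := Real.one_le_rpow hx1 (hσ k).le
      linarith
    have h2 : ((⌊x ^ τ⌋₊ : ℝ) + 1) ≤ 2 * x ^ τ := by
      have ha : (⌊x ^ τ⌋₊ : ℝ) ≤ x ^ τ := Nat.floor_le (by positivity)
      have hb : (1:ℝ) ≤ x ^ τ := Real.one_le_rpow hx1 hτ.le
      linarith
    have h3 : ∏ k, ((⌊x ^ σ k⌋₊ : ℝ) + 1) ≤ ∏ k, ((2:ℝ) * x ^ σ k) :=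
      Finset.prod_le_prod (fun k _ => by positivity) (fun k _ => h1 k)
    have h4 : ∏ k, ((2:ℝ) * x ^ σ k) = 2 ^ m * x ^ s := by
      rw [Finset.prod_mul_distrib, Finset.prod_const, Finset.card_univ, Fintype.card_fin]
      congr 1
      have h5 : ∀ k : Fin m, x ^ σ k = Real.exp (Real.log x * σ k) :=
        fun k => Real.rpow_def_of_pos hx0 _
      calc ∏ k, x ^ σ k = ∏ k, Real.exp (Real.log x * σ k) :=
            Finset.prod_congr rfl fun k _ => h5 k
        _ = Real.exp (∑ k, Real.log x * σ k) := (Real.exp_sum _ _).symm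
        _ = Real.exp (Real.log x * s) := by rw [← Finset.mul_sum, hs]
        _ = x ^ s := (Real.rpow_def_of_pos hx0 _).symm
    calc (∏ k, ((⌊x ^ σ k⌋₊ : ℝ) + 1)) * ((⌊x ^ τ⌋₊ : ℝ) + 1)
        ≤ (2 ^ m * x ^ s) * (2 * x ^ τ) := by
          apply mul_le_mul (h4 ▸ h3) h2 (by positivity) (by positivity)
      _ = 2 ^ (m + 1) * x ^ (s + τ) := by
          rw [Real.rpow_add hx0 s τ]; ring
  have hE : 2 * (⌈Bd / δ⌉₊ : ℝ) + 1 ≤ Real.exp E := by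
    have hceil : (⌈Bd / δ⌉₊ : ℝ) < Bd / δ + 1 :=
      Nat.ceil_lt_add_one (by positivity)
    have hBδ : Bd / δ = 4 * Bd * Real.exp (x ^ ν) := by
      rw [hδdef, Real.exp_neg]
      field_simp
    have hy0 : 0 ≤ x ^ β + 2 * n + n * (Real.log x + Real.log W) := by
      have h1 : (0:ℝ) ≤ x ^ β := Real.rpow_nonneg hx0.le _
      have h3 : (0:ℝ) ≤ (n:ℝ) := Nat.cast_nonneg n
      have h4 : (0:ℝ) ≤ (n:ℝ) * (Real.log x + Real.log W) :=
        mul_nonneg h3 (by linarith)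
      linarith
    have hBle : Bd ≤ Real.exp (x ^ β + 2 * n + n * (Real.log x + Real.log W)) := by
      have e1 : (n + 1 : ℝ) ≤ Real.exp n := by
        have := Real.add_one_le_exp (n : ℝ); linarith
      have e3' : (2:ℝ) ^ n ≤ Real.exp n := by
        have h2e : (2:ℝ) ≤ Real.exp 1 := by
          have := Real.exp_one_gt_d9; linarith
        calc (2:ℝ) ^ n ≤ (Real.exp 1) ^ n := pow_le_pow_left₀ (by norm_num) h2e n
          _ = Real.exp n := by rw [← Real.exp_nat_mul]; norm_num
      have e4' : (max 1 Z) ^ n ≤ Real.exp (n * (Real.log x + Real.log W)) := by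
        have hxW : (0:ℝ) < x * W := mul_pos hx0 (by linarith)
        calc (max 1 Z) ^ n ≤ (x * W) ^ n := pow_le_pow_left₀ (by positivity) hZ1 n
          _ = Real.exp (n * Real.log (x * W)) := by
              rw [← Real.exp_log hxW, ← Real.exp_nat_mul, Real.exp_log hxW]
          _ = Real.exp (n * (Real.log x + Real.log W)) := by
              rw [Real.log_mul hx0.ne' (by linarith : (0:ℝ) < W).ne']
      calc Bd = ((n:ℝ) + 1) * (Hn : ℝ) * ((2:ℝ) ^ n * (max 1 Z) ^ n) := by
            rw [hBdef, hcbdef]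
        _ ≤ Real.exp n * Real.exp (x ^ β) *
              (Real.exp n * Real.exp (n * (Real.log x + Real.log W))) := by
            apply mul_le_mul (mul_le_mul e1 hHnle (by positivity) (by positivity))
              (mul_le_mul e3' e4' (by positivity) (by positivity)) (by positivity) (by positivity)
        _ = Real.exp (x ^ β + 2 * n + n * (Real.log x + Real.log W)) := by
            rw [← Real.exp_add, ← Real.exp_add, ← Real.exp_add]
            ring_nf
    have h11 : (11:ℝ) ≤ Real.exp 3 := by
      have h := Real.exp_one_gt_d9
      have h3 : Real.exp 3 = (Real.exp 1) ^ 3 := by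
        rw [← Real.exp_nat_mul]; norm_num
      have h4 : (2.7182818283:ℝ) ^ 3 ≤ (Real.exp 1) ^ 3 :=
        pow_le_pow_left₀ (by norm_num) h.le 3
      have h5 : (11:ℝ) ≤ (2.7182818283:ℝ) ^ 3 := by norm_num
      linarith
    have hey : (1:ℝ) ≤ Real.exp (x ^ β + 2 * n + n * (Real.log x + Real.log W) + x ^ ν) :=
      Real.one_le_exp (by
        have h2 : (0:ℝ) ≤ x ^ ν := Real.rpow_nonneg hx0.le _
        linarith)
    have hepos := Real.exp_pos (x ^ ν)
    have hepos2 := Real.exp_pos (x ^ β + 2 * n + n * (Real.log x + Real.log W))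
    calc 2 * (⌈Bd / δ⌉₊ : ℝ) + 1 ≤ 2 * (Bd / δ + 1) + 1 := by linarith
      _ = 8 * Bd * Real.exp (x ^ ν) + 3 := by rw [hBδ]; ring
      _ ≤ 8 * Real.exp (x ^ β + 2 * n + n * (Real.log x + Real.log W)) * Real.exp (x ^ ν) + 3 := by
          have := mul_le_mul_of_nonneg_right hBle hepos.le
          linarith
      _ = 8 * Real.exp (x ^ β + 2 * n + n * (Real.log x + Real.log W) + x ^ ν) + 3 := by
          rw [Real.exp_add (x ^ β + 2 * n + n * (Real.log x + Real.log W)) (x ^ ν)]; ring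
      _ ≤ 11 * Real.exp (x ^ β + 2 * n + n * (Real.log x + Real.log W) + x ^ ν) := by
          linarith
      _ ≤ Real.exp 3 * Real.exp (x ^ β + 2 * n + n * (Real.log x + Real.log W) + x ^ ν) := by
          exact mul_le_mul_of_nonneg_right h11 (Real.exp_pos _).le
      _ = Real.exp E := by rw [← Real.exp_add, hEdef]; ring_nf
  have hEb : E ≤ 5 * x ^ γ := by
    have hmain : 2 * (n:ℝ) + (n:ℝ) * Real.log W ≤ x ^ γ := by
      have h := e2
      rw [hxdef] at h ⊢
      nlinarith
    have hnx : (n:ℝ) * Real.log x ≤ x ^ γ := by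
      have := e3
      rw [hxdef] at this ⊢
      linarith
    rw [hEdef]
    have hexp : (n:ℝ) * (Real.log x + Real.log W)
        = (n:ℝ) * Real.log x + (n:ℝ) * Real.log W := by ring
    rw [hexp]
    linarith [eβ, eν, e4]
  have hlt : (((2 * ((∏ k, (⌊x ^ σ k⌋₊ + 1)) * (⌊x ^ τ⌋₊ + 1)) : ℕ)) : ℝ) * E
      < x ^ (1 + β) := by
    have hxstg : (0:ℝ) < x ^ (s + τ + γ) := Real.rpow_pos_of_pos hx0 _
    calc (((2 * ((∏ k, (⌊x ^ σ k⌋₊ + 1)) * (⌊x ^ τ⌋₊ + 1)) : ℕ)) : ℝ) * E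
        = 2 * (((∏ k, (⌊x ^ σ k⌋₊ + 1)) * (⌊x ^ τ⌋₊ + 1) : ℕ) : ℝ) * E := by
          push_cast; ring
      _ ≤ 2 * (2 ^ (m + 1) * x ^ (s + τ)) * (5 * x ^ γ) := by
          apply mul_le_mul _ hEb hE0 (by positivity)
          linarith [hT]
      _ = 10 * 2 ^ (m + 1) * x ^ (s + τ + γ) := by
          rw [Real.rpow_add hx0 (s + τ) γ]; ring
      _ < (20 * 2 ^ (m + 1) + 1) * x ^ (s + τ + γ) := by
          have hup : (0:ℝ) < 2 ^ (m + 1) * x ^ (s + τ + γ) := by positivity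
          nlinarith [hxstg]
      _ ≤ x ^ (1 + β) := e5
  have hcard : ((2 * ⌈Bd / δ⌉₊ + 1) ^ 2) ^ ((∏ k, (⌊x ^ σ k⌋₊ + 1)) * (⌊x ^ τ⌋₊ + 1))
      < (Hn + 1) ^ (n + 1) := by
    have key : (((2 * ⌈Bd / δ⌉₊ + 1 : ℕ) : ℝ) ^ 2) ^
        ((∏ k, (⌊x ^ σ k⌋₊ + 1)) * (⌊x ^ τ⌋₊ + 1)) < ((Hn : ℝ) + 1) ^ (n + 1) := by
      have hr0 : (0:ℝ) ≤ ((2 * ⌈Bd / δ⌉₊ + 1 : ℕ) : ℝ) := Nat.cast_nonneg _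
      calc (((2 * ⌈Bd / δ⌉₊ + 1 : ℕ) : ℝ) ^ 2) ^ ((∏ k, (⌊x ^ σ k⌋₊ + 1)) * (⌊x ^ τ⌋₊ + 1))
          = ((2 * ⌈Bd / δ⌉₊ + 1 : ℕ) : ℝ) ^
              (2 * ((∏ k, (⌊x ^ σ k⌋₊ + 1)) * (⌊x ^ τ⌋₊ + 1))) := by rw [← pow_mul]
        _ ≤ (Real.exp E) ^ (2 * ((∏ k, (⌊x ^ σ k⌋₊ + 1)) * (⌊x ^ τ⌋₊ + 1))) := by
            apply pow_le_pow_left₀ hr0 _ _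
            push_cast
            exact hE
        _ = Real.exp ((((2 * ((∏ k, (⌊x ^ σ k⌋₊ + 1)) * (⌊x ^ τ⌋₊ + 1)) : ℕ)) : ℝ) * E) := by
            rw [← Real.exp_nat_mul]
        _ < Real.exp (x ^ (1 + β)) := Real.exp_lt_exp.mpr hlt
        _ ≤ (Real.exp (x ^ β)) ^ (n + 1) := by
            rw [← Real.exp_nat_mul]
            apply Real.exp_le_exp.mpr
            rw [Real.rpow_add hx0 1 β, Real.rpow_one]
            have hxn : x ≤ ((n + 1 : ℕ) : ℝ) := by rw [hxdef]; push_cast; linarith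
            have hb0 := Real.rpow_nonneg hx0.le β
            exact mul_le_mul_of_nonneg_right hxn hb0
        _ ≤ ((Hn : ℝ) + 1) ^ (n + 1) := by
            apply pow_le_pow_left₀ (Real.exp_nonneg _)
            rw [hHdef]
            exact (Nat.lt_floor_add_one _).le
    exact_mod_cast key
  obtain ⟨P, hP0, hPd, hPh, hPe⟩ :=
    build_poly n m ξ (fun k => ⌊x ^ σ k⌋₊) ⌊x ^ τ⌋₊ Hn δ cb Bd hδ0 hcb0 hchoose hBdef hcard
  refine ⟨P, hP0, hPd, ?_, ?_⟩
  · intro r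
    calc ((|P.coeff r| : ℤ) : ℝ) ≤ ((Hn : ℤ) : ℝ) := by exact_mod_cast hPh r
      _ ≤ Real.exp (x ^ β) := by push_cast; exact hHnle
  · intro i j hik hjτ
    refine le_trans (hPe i j (fun k => Nat.le_floor (hik k)) (Nat.le_floor hjτ)) ?_
    rw [hδdef]
    have := Real.exp_pos (-x ^ ν)
    linarith
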